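/- Let p be an odd prime such that 2p + 1 is also prime (a Germain prime). Then for all pairwise coprime nonzero integers x, y, z with x^p + y^p = z^p, p^2 divides one of x, y, z. -/

import Mathlib

/-! Auxiliary machinery for Sophie Germain's theorem. -/

private def sgE (p : ℕ) (a b : ℤ) : ℤ := ∑ i ∈ Finset.range p, a ^ i * (-b) ^ (p - 1 - i)

private lemma sgE_mul (p : ℕ) (hpodd : Odd p) (a b : ℤ) :
    (a + b) * sgE p a b = a ^ p + b ^ p := by
  have h := geom_sum₂_mul a (-b) p
  rw [sub_neg_eq_add, Odd.neg_pow hpodd, sub_neg_eq_add] at h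
  rw [sgE, mul_comm]
  exact h

private lemma sgE_mod (p : ℕ) (a b : ℤ) :
    (a + b) ∣ sgE p a b - (p : ℤ) * a ^ (p - 1) := by
  have h1 : ∑ i ∈ Finset.range p, a ^ i * a ^ (p - 1 - i) = (p : ℤ) * a ^ (p - 1) := by
    have hc : ∀ i ∈ Finset.range p, a ^ i * a ^ (p - 1 - i) = a ^ (p - 1) := by
      intro i hi
      rw [← pow_add]
      congr 1
      have := Finset.mem_range.mp hi
      omega
    rw [Finset.sum_congr rfl hc, Finset.sum_const, Finset.card_range, nsmul_eq_mul]
  have h3 : sgE p a b - (p : ℤ) * a ^ (p - 1)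
      = ∑ i ∈ Finset.range p, a ^ i * ((-b) ^ (p - 1 - i) - a ^ (p - 1 - i)) := by
    rw [← h1, sgE, ← Finset.sum_sub_distrib]
    exact Finset.sum_congr rfl fun i _ => by ring
  rw [h3]
  refine Finset.dvd_sum fun i _ => Dvd.dvd.mul_left ?_ _
  have h4 : (-b) - a ∣ (-b) ^ (p - 1 - i) - a ^ (p - 1 - i) := sub_dvd_pow_sub_pow _ _ _
  have h5 : (-b) - a = -(a + b) := by ring
  rwa [h5, neg_dvd] at h4

private lemma flt_little (p : ℕ) (hp : p.Prime) (m : ℤ) : (p : ℤ) ∣ m ^ p - m := by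
  haveI : Fact p.Prime := ⟨hp⟩
  rw [← ZMod.intCast_zmod_eq_zero_iff_dvd]
  push_cast
  rw [ZMod.pow_card]
  ring

private lemma pth_power_cases (p q : ℕ) (hp0 : p ≠ 0) (hq : q.Prime) (hq2 : q = 2 * p + 1)
    (a : ZMod q) : a ^ p = 0 ∨ a ^ p = 1 ∨ a ^ p = -1 := by
  haveI : Fact q.Prime := ⟨hq⟩
  by_cases h : a = 0
  · left; rw [h]; exact zero_pow hp0
  · right
    have h1 : a ^ p * a ^ p = 1 := by
      rw [← pow_add]
      have hpp : p + p = q - 1 := by omega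
      rw [hpp]
      exact ZMod.pow_card_sub_one_eq_one h
    exact mul_self_eq_one_iff.mp h1

private lemma pth_pm_one (p q : ℕ) (hp0 : p ≠ 0) (hq : q.Prime) (hq2 : q = 2 * p + 1)
    (m : ℤ) (hm : ¬ (q : ℤ) ∣ m) :
    ((m : ZMod q)) ^ p = 1 ∨ ((m : ZMod q)) ^ p = -1 := by
  haveI : Fact q.Prime := ⟨hq⟩
  rcases pth_power_cases p q hp0 hq hq2 (m : ZMod q) with h | h | h
  · exact absurd ((ZMod.intCast_zmod_eq_zero_iff_dvd m q).mp ((pow_eq_zero_iff hp0).mp h)) hm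
  · exact Or.inl h
  · exact Or.inr h

private lemma pm_mul_self {K : Type*} [Ring K] {t : K} (h : t = 1 ∨ t = -1) : t * t = 1 := by
  rcases h with rfl | rfl <;> norm_num

private lemma pm_neg {K : Type*} [Ring K] {t : K} (h : t = 1 ∨ t = -1) :
    -t = 1 ∨ -t = -1 := by
  rcases h with rfl | rfl
  · right; rfl
  · left; rw [neg_neg]

private lemma int_cast_zmod_ne (q : ℕ) (hq7 : 7 ≤ q) (k : ℤ) (h0 : k ≠ 0) (h3 : |k| ≤ 3) :
    ((k : ℤ) : ZMod q) ≠ 0 := by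
  intro h
  rw [ZMod.intCast_zmod_eq_zero_iff_dvd] at h
  have h4 : (q : ℤ) ∣ |k| := (dvd_abs _ _).mpr h
  have h5 := Int.le_of_dvd (abs_pos.mpr h0) h4
  have h6 : (q : ℤ) ≤ 3 := h5.trans h3
  omega

private lemma sum3_ne (q : ℕ) (hq7 : 7 ≤ q) (u v w : ZMod q)
    (hu : u = 1 ∨ u = -1) (hv : v = 1 ∨ v = -1) (hw : w = 1 ∨ w = -1) :
    u + v + w ≠ 0 := by
  have k1 := int_cast_zmod_ne q hq7 1 (by norm_num) (by norm_num)
  have k3 := int_cast_zmod_ne q hq7 3 (by norm_num) (by norm_num)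
  rcases hu with rfl | rfl <;> rcases hv with rfl | rfl <;> rcases hw with rfl | rfl <;> intro h <;>
    first
    | exact k1 (by push_cast; linear_combination h)
    | exact k1 (by push_cast; linear_combination -h)
    | exact k3 (by push_cast; linear_combination h)
    | exact k3 (by push_cast; linear_combination -h)

private lemma q_not_unit (q : ℕ) (hq7 : 7 ≤ q) : ¬ IsUnit ((q : ℕ) : ℤ) := by
  intro h
  rcases Int.isUnit_iff.mp h with h | h <;> omega

private lemma assoc_pow_odd {p : ℕ} (hpodd : Odd p) (u v : ℤ) (h : Associated (u ^ p) v) :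
    ∃ c : ℤ, c ^ p = v := by
  obtain ⟨ε, hε⟩ := h
  rcases Int.isUnit_iff.mp ε.isUnit with h1 | h1
  · exact ⟨u, by rw [← hε, h1, mul_one]⟩
  · refine ⟨-u, ?_⟩
    rw [Odd.neg_pow hpodd, ← hε, h1]
    ring

private lemma barlow (p : ℕ) (hp : p.Prime) (hpodd : Odd p) (a b w : ℤ)
    (hab : IsCoprime a b) (heq : a ^ p + b ^ p = w ^ p) (hpw : ¬ (p : ℤ) ∣ w) :
    ∃ c t : ℤ, c ^ p = a + b ∧ t ^ p = sgE p a b ∧ c * t = w := by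
  have hpi : Prime ((p : ℕ) : ℤ) := Nat.prime_iff_prime_int.mp hp
  have hmul : (a + b) * sgE p a b = w ^ p := by rw [sgE_mul p hpodd]; exact heq
  have hpab : ¬ (p : ℤ) ∣ a + b := by
    intro hd
    exact hpw (hpi.dvd_of_dvd_pow (show (p : ℤ) ∣ w ^ p by rw [← hmul]; exact hd.mul_right _))
  have hcop : IsCoprime (a + b) (sgE p a b) := by
    rw [Int.isCoprime_iff_gcd_eq_one]
    by_contra hg
    have hga : ((Int.gcd (a + b) (sgE p a b) : ℕ) : ℤ) ∣ a + b := Int.gcd_dvd_left _ _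
    have hgE : ((Int.gcd (a + b) (sgE p a b) : ℕ) : ℤ) ∣ sgE p a b := Int.gcd_dvd_right _ _
    have hgpa : ((Int.gcd (a + b) (sgE p a b) : ℕ) : ℤ) ∣ (p : ℤ) * a ^ (p - 1) := by
      have h2 := hga.trans (sgE_mod p a b)
      have h3 := dvd_sub hgE h2
      simpa using h3
    have hcopa : IsCoprime ((Int.gcd (a + b) (sgE p a b) : ℕ) : ℤ) a := by
      have h3 : IsCoprime (a + b) a := by
        have h4 := hab.symm.add_mul_left_left 1
        rwa [mul_one, add_comm] at h4
      exact h3.of_isCoprime_of_dvd_left hga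
    have hgp : ((Int.gcd (a + b) (sgE p a b) : ℕ) : ℤ) ∣ (p : ℤ) :=
      (hcopa.pow_right).dvd_of_dvd_mul_right hgpa
    have hgp' : Int.gcd (a + b) (sgE p a b) ∣ p := Int.natCast_dvd_natCast.mp hgp
    rcases hp.eq_one_or_self_of_dvd _ hgp' with h1 | h1
    · exact hg h1
    · rw [h1] at hga; exact hpab hga
  obtain ⟨c0, hc0⟩ := exists_associated_pow_of_mul_eq_pow' hcop hmul
  obtain ⟨c, hc⟩ := assoc_pow_odd hpodd c0 (a + b) hc0
  have hmul2 : sgE p a b * (a + b) = w ^ p := by rw [mul_comm]; exact hmul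
  obtain ⟨t0, ht0⟩ := exists_associated_pow_of_mul_eq_pow' hcop.symm hmul2
  obtain ⟨t, ht⟩ := assoc_pow_odd hpodd t0 _ ht0
  refine ⟨c, t, hc, ht, ?_⟩
  have hct : (c * t) ^ p = w ^ p := by rw [mul_pow, hc, ht, hmul]
  exact hpodd.strictMono_pow.injective hct

private lemma q_dvd_of_sum (p q : ℕ) (hp0 : p ≠ 0) (hq : q.Prime) (hq2 : q = 2 * p + 1)
    (hq7 : 7 ≤ q) (X Y Z : ℤ) (heq : X ^ p + Y ^ p + Z ^ p = 0) :
    (q : ℤ) ∣ X ∨ (q : ℤ) ∣ Y ∨ (q : ℤ) ∣ Z := by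
  haveI : Fact q.Prime := ⟨hq⟩
  by_contra hc
  push_neg at hc
  obtain ⟨h1, h2, h3⟩ := hc
  have hcast : ((X : ZMod q)) ^ p + ((Y : ZMod q)) ^ p + ((Z : ZMod q)) ^ p = 0 := by
    have := congrArg (fun t : ℤ => (t : ZMod q)) heq
    push_cast at this
    exact this
  exact sum3_ne q hq7 _ _ _ (pth_pm_one p q hp0 hq hq2 X h1)
    (pth_pm_one p q hp0 hq hq2 Y h2) (pth_pm_one p q hp0 hq hq2 Z h3) hcast

private lemma caseI (p q : ℕ) (hp : p.Prime) (hpodd : Odd p) (hp3 : 3 ≤ p)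
    (hq : q.Prime) (hq2 : q = 2 * p + 1)
    (X Y Z : ℤ) (hXY : IsCoprime X Y) (hYZ : IsCoprime Y Z) (hXZ : IsCoprime X Z)
    (heq : X ^ p + Y ^ p + Z ^ p = 0)
    (hpX : ¬(p : ℤ) ∣ X) (hpY : ¬(p : ℤ) ∣ Y) (hpZ : ¬(p : ℤ) ∣ Z)
    (hqX : (q : ℤ) ∣ X) : False := by
  haveI : Fact q.Prime := ⟨hq⟩
  have hq7 : 7 ≤ q := by omega
  have hp0 : p ≠ 0 := by omega
  have hqnu : ¬ IsUnit ((q : ℕ) : ℤ) := q_not_unit q hq7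
  have hqY : ¬ (q : ℤ) ∣ Y := fun h => hqnu (hXY.isUnit_of_dvd' hqX h)
  have hqZ : ¬ (q : ℤ) ∣ Z := fun h => hqnu (hXZ.isUnit_of_dvd' hqX h)
  obtain ⟨A, tA, hA, htA, hAX⟩ := barlow p hp hpodd Y Z (-X) hYZ
    (by rw [Odd.neg_pow hpodd]; linarith) (by rw [dvd_neg]; exact hpX)
  obtain ⟨B, tB, hB, htB, hBY⟩ := barlow p hp hpodd X Z (-Y) hXZ
    (by rw [Odd.neg_pow hpodd]; linarith) (by rw [dvd_neg]; exact hpY)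
  obtain ⟨C, tC, hC, htC, hCZ⟩ := barlow p hp hpodd X Y (-Z) hXY
    (by rw [Odd.neg_pow hpodd]; linarith) (by rw [dvd_neg]; exact hpZ)
  have hXq : ((X : ℤ) : ZMod q) = 0 := (ZMod.intCast_zmod_eq_zero_iff_dvd X q).mpr hqX
  have hqB : ¬ (q : ℤ) ∣ B := fun h => hqY (dvd_neg.mp (hBY ▸ h.mul_right tB))
  have hqC : ¬ (q : ℤ) ∣ C := fun h => hqZ (dvd_neg.mp (hCZ ▸ h.mul_right tC))
  by_cases hqA : (q : ℤ) ∣ A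
  · -- q divides Y + Z
    have hqYZ : (q : ℤ) ∣ Y + Z := by rw [← hA]; exact dvd_pow hqA hp0
    have hEq : ((sgE p Y Z : ℤ) : ZMod q) = (p : ZMod q) * ((Y : ZMod q)) ^ (p - 1) := by
      have h2 : (q : ℤ) ∣ sgE p Y Z - (p : ℤ) * Y ^ (p - 1) := hqYZ.trans (sgE_mod p Y Z)
      have h3 := (ZMod.intCast_zmod_eq_zero_iff_dvd _ q).mpr h2
      push_cast at h3
      linear_combination h3
    have hpq : ((p : ℕ) : ZMod q) ≠ 0 := by
      rw [Ne, ZMod.natCast_eq_zero_iff]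
      intro h
      have := Nat.le_of_dvd (by omega) h
      omega
    have hYq : ((Y : ℤ) : ZMod q) ≠ 0 :=
      fun h => hqY ((ZMod.intCast_zmod_eq_zero_iff_dvd _ _).mp h)
    have hqtA : ¬ (q : ℤ) ∣ tA := by
      intro h
      have h4 : ((tA : ℤ) : ZMod q) = 0 := (ZMod.intCast_zmod_eq_zero_iff_dvd _ _).mpr h
      have h5 : ((sgE p Y Z : ℤ) : ZMod q) = 0 := by
        rw [← htA]; push_cast; rw [h4]; exact zero_pow hp0
      rw [hEq] at h5
      rcases mul_eq_zero.mp h5 with h | h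
      · exact hpq h
      · exact hYq ((pow_eq_zero_iff (by omega : p - 1 ≠ 0)).mp h)
    -- key quantities in ZMod q
    have m1 : (p : ZMod q) * ((Y : ZMod q)) ^ (p - 1) = ((tA : ZMod q)) ^ p := by
      have h6 : ((tA : ZMod q)) ^ p = ((sgE p Y Z : ℤ) : ZMod q) := by
        have := congrArg (fun t : ℤ => (t : ZMod q)) htA
        push_cast at this
        exact this
      rw [h6, hEq]
    have m2 : ((Y : ZMod q)) ^ (p - 1) * (Y : ZMod q) = ((Y : ZMod q)) ^ p := by
      rw [← pow_succ]
      congr 1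
      omega
    have m3 : ((tA : ZMod q)) ^ p * ((tA : ZMod q)) ^ p = 1 :=
      pm_mul_self (pth_pm_one p q hp0 hq hq2 tA hqtA)
    have m4 : ((Y : ZMod q)) ^ p * ((Y : ZMod q)) ^ p = 1 :=
      pm_mul_self (pth_pm_one p q hp0 hq hq2 Y hqY)
    have m6 : ((C : ZMod q)) ^ p * ((C : ZMod q)) ^ p = 1 :=
      pm_mul_self (pth_pm_one p q hp0 hq hq2 C hqC)
    have m7 : ((B : ZMod q)) ^ p * ((B : ZMod q)) ^ p = 1 :=
      pm_mul_self (pth_pm_one p q hp0 hq hq2 B hqB)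
    have m8 : 2 * (p : ZMod q) = -1 := by
      have h7 : ((2 * p + 1 : ℕ) : ZMod q) = 0 := by
        rw [← hq2]; exact ZMod.natCast_self q
      push_cast at h7
      linear_combination h7
    have hApow : ((A : ZMod q)) ^ p = 0 := by
      rw [(ZMod.intCast_zmod_eq_zero_iff_dvd _ _).mpr hqA]
      exact zero_pow hp0
    have hY2int : C ^ p + A ^ p - B ^ p = 2 * Y := by rw [hC, hA, hB]; ring
    have hY2c : ((C : ZMod q)) ^ p + ((A : ZMod q)) ^ p - ((B : ZMod q)) ^ p
        = 2 * (Y : ZMod q) := by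
      have := congrArg (fun t : ℤ => (t : ZMod q)) hY2int
      push_cast at this
      exact this
    have m5 : ((C : ZMod q)) ^ p - ((B : ZMod q)) ^ p = 2 * (Y : ZMod q) := by
      linear_combination hY2c - hApow
    -- the contradiction: q ∣ 3
    have i1 : (p : ZMod q) * ((Y : ZMod q)) ^ p = ((tA : ZMod q)) ^ p * (Y : ZMod q) := by
      linear_combination (Y : ZMod q) * m1 - (p : ZMod q) * m2
    have i2 : (Y : ZMod q) * (Y : ZMod q) = (p : ZMod q) * (p : ZMod q) := by
      linear_combination (-((p : ZMod q) * ((Y : ZMod q)) ^ p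
        + ((tA : ZMod q)) ^ p * (Y : ZMod q))) * i1
        + (p : ZMod q) * (p : ZMod q) * m4 - (Y : ZMod q) * (Y : ZMod q) * m3
    have i3 : (2 * (Y : ZMod q)) * (2 * (Y : ZMod q)) = 1 := by
      linear_combination 4 * i2 + (2 * (p : ZMod q) - 1) * m8
    have i4 : 2 * (((C : ZMod q)) ^ p * ((B : ZMod q)) ^ p) = 1 := by
      linear_combination (-(((C : ZMod q)) ^ p - ((B : ZMod q)) ^ p + 2 * (Y : ZMod q))) * m5
        - i3 + m6 + m7
    have i5 : ((3 : ℤ) : ZMod q) = 0 := by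
      push_cast
      linear_combination (2 * ((C : ZMod q)) ^ p * ((B : ZMod q)) ^ p + 1) * i4
        - 4 * (((B : ZMod q)) ^ p * ((B : ZMod q)) ^ p) * m6 - 4 * m7
    exact int_cast_zmod_ne q hq7 3 (by norm_num) (by norm_num) i5
  · -- q does not divide A : sum of three ±1 vanishes, impossible
    have hX2int : C ^ p + B ^ p - A ^ p = 2 * X := by rw [hC, hB, hA]; ring
    have hX2c : ((C : ZMod q)) ^ p + ((B : ZMod q)) ^ p - ((A : ZMod q)) ^ p
        = 2 * (X : ZMod q) := by
      have := congrArg (fun t : ℤ => (t : ZMod q)) hX2int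
      push_cast at this
      exact this
    have m : ((C : ZMod q)) ^ p + ((B : ZMod q)) ^ p + -(((A : ZMod q)) ^ p) = 0 := by
      linear_combination hX2c + 2 * hXq
    exact sum3_ne q hq7 _ _ _ (pth_pm_one p q hp0 hq hq2 C hqC)
      (pth_pm_one p q hp0 hq hq2 B hqB)
      (pm_neg (pth_pm_one p q hp0 hq hq2 A hqA)) m

private lemma caseII (p : ℕ) (hp : p.Prime) (hpodd : Odd p) (hp3 : 3 ≤ p)
    (X Y Z : ℤ) (hX : X ≠ 0) (hXY : IsCoprime X Y) (hXZ : IsCoprime X Z)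
    (heq : X ^ p + Y ^ p + Z ^ p = 0) (hpX : (p : ℤ) ∣ X) :
    (p : ℤ) ^ 2 ∣ X := by
  have hpi : Prime ((p : ℕ) : ℤ) := Nat.prime_iff_prime_int.mp hp
  have hp0 : p ≠ 0 := by omega
  have hpY : ¬ (p : ℤ) ∣ Y := fun h => hpi.not_unit (hXY.isUnit_of_dvd' hpX h)
  have hpZ : ¬ (p : ℤ) ∣ Z := fun h => hpi.not_unit (hXZ.isUnit_of_dvd' hpX h)
  -- p divides Y + Z
  have h1 : (p : ℤ) ∣ Y + Z := by
    have e1 := flt_little p hp Y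
    have e2 := flt_little p hp Z
    have e3 : (p : ℤ) ∣ X ^ p := dvd_pow hpX hp0
    have e4 : Y + Z = -(X ^ p) - (Y ^ p - Y) - (Z ^ p - Z) := by linear_combination heq
    rw [e4]
    exact dvd_sub (dvd_sub (dvd_neg.mpr e3) e1) e2
  have hpXY : ¬ (p : ℤ) ∣ X + Y := fun h => hpY (by simpa using dvd_sub h hpX)
  have hpXZ : ¬ (p : ℤ) ∣ X + Z := fun h => hpZ (by simpa using dvd_sub h hpX)
  obtain ⟨C, tC, hC, htC, hCZ⟩ := barlow p hp hpodd X Y (-Z) hXY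
    (by rw [Odd.neg_pow hpodd]; linarith) (by rw [dvd_neg]; exact hpZ)
  obtain ⟨B, tB, hB, htB, hBY⟩ := barlow p hp hpodd X Z (-Y) hXZ
    (by rw [Odd.neg_pow hpodd]; linarith) (by rw [dvd_neg]; exact hpY)
  -- p divides B + C
  have h2 : (p : ℤ) ∣ B + C := by
    have e1 := flt_little p hp B
    have e2 := flt_little p hp C
    have e3 : (p : ℤ) ∣ B ^ p + C ^ p := by
      have e4 : B ^ p + C ^ p = 2 * X + (Y + Z) := by rw [hB, hC]; ring
      rw [e4]
      exact dvd_add (Dvd.dvd.mul_left hpX 2) h1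
    have e5 : B + C = (B ^ p + C ^ p) - (B ^ p - B) - (C ^ p - C) := by ring
    rw [e5]
    exact dvd_sub (dvd_sub e3 e1) e2
  -- p divides sgE p B C
  have h3 : (p : ℤ) ∣ sgE p B C := by
    have e1 : (p : ℤ) ∣ sgE p B C - (p : ℤ) * B ^ (p - 1) := h2.trans (sgE_mod p B C)
    have e2 : (p : ℤ) ∣ (p : ℤ) * B ^ (p - 1) := Dvd.intro _ rfl
    simpa using dvd_add e1 e2
  -- p² divides B^p + C^p
  have h4 : (p : ℤ) ^ 2 ∣ B ^ p + C ^ p := by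
    have e1 : (p : ℤ) * (p : ℤ) ∣ (B + C) * sgE p B C := mul_dvd_mul h2 h3
    rw [sgE_mul p hpodd] at e1
    rwa [pow_two]
  -- p² divides Y + Z  (lifting the exponent)
  have hYZne : Y + Z ≠ 0 := by
    intro h0
    have hZe : Z = -Y := by linarith
    rw [hZe, Odd.neg_pow hpodd] at heq
    have : X ^ p = 0 := by linarith
    exact hX ((pow_eq_zero_iff hp0).mp this)
  have h5 : (p : ℤ) ^ 2 ∣ Y + Z := by
    have hlte := Int.emultiplicity_pow_add_pow hp hpodd h1 hpY hpodd
    have hfin : FiniteMultiplicity p p := Nat.finiteMultiplicity_iff.mpr ⟨hp.ne_one, hp.pos⟩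
    rw [hfin.emultiplicity_self] at hlte
    have hYZp : Y ^ p + Z ^ p = (-X) ^ p := by rw [Odd.neg_pow hpodd]; linarith
    have hdvd : ((p : ℤ)) ^ p ∣ Y ^ p + Z ^ p := by
      rw [hYZp]
      exact pow_dvd_pow_of_dvd (dvd_neg.mpr hpX) p
    have hle : ((p : ℕ) : ℕ∞) ≤ emultiplicity ((p : ℕ) : ℤ) (Y ^ p + Z ^ p) :=
      le_emultiplicity_of_pow_dvd hdvd
    rw [hlte] at hle
    have h3le : ((3 : ℕ) : ℕ∞) ≤ emultiplicity ((p : ℕ) : ℤ) (Y + Z) + 1 :=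
      le_trans (by exact_mod_cast Nat.cast_le.mpr hp3) hle
    have h2le : ((2 : ℕ) : ℕ∞) ≤ emultiplicity ((p : ℕ) : ℤ) (Y + Z) := by
      have h32 : ((3 : ℕ) : ℕ∞) = ((2 : ℕ) : ℕ∞) + 1 := by norm_num
      rw [h32] at h3le
      exact (ENat.add_le_add_iff_right (by simp)).mp h3le
    exact pow_dvd_of_le_emultiplicity h2le
  -- conclude
  have h6 : (p : ℤ) ^ 2 ∣ 2 * X := by
    have e1 : 2 * X = (B ^ p + C ^ p) - (Y + Z) := by rw [hB, hC]; ring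
    rw [e1]
    exact dvd_sub h4 h5
  have hp2 : ¬ (p : ℤ) ∣ 2 := by
    intro h
    have := Int.le_of_dvd (by norm_num) h
    have h3' : (3 : ℤ) ≤ (p : ℤ) := by exact_mod_cast hp3
    omega
  exact hpi.pow_dvd_of_dvd_mul_left 2 hp2 h6

/-- If p is an odd prime with 2p + 1 also prime (a Germain prime), then in any
solution of the Fermat equation with pairwise coprime nonzero integers,
p² divides one of x, y, z. -/
theorem sophie_germain_for_germain_primes
    (p : ℕ) (hp : p.Prime) (hpodd : Odd p) (hgp : (2 * p + 1).Prime)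
    (x y z : ℤ) (hx : x ≠ 0) (hy : y ≠ 0) (hz : z ≠ 0)
    (hxy : IsCoprime x y) (hyz : IsCoprime y z) (hxz : IsCoprime x z)
    (hfermat : x ^ p + y ^ p = z ^ p) :
    (p : ℤ) ^ 2 ∣ x ∨ (p : ℤ) ^ 2 ∣ y ∨ (p : ℤ) ^ 2 ∣ z := by
  have hp3 : 3 ≤ p := by
    rcases hpodd with ⟨k, hk⟩
    have := hp.two_le
    omega
  have hp0 : p ≠ 0 := by omega
  set q := 2 * p + 1 with hq2
  have hq7 : 7 ≤ q := by omega
  have hw : (-z) ≠ 0 := neg_ne_zero.mpr hz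
  have heq : x ^ p + y ^ p + (-z) ^ p = 0 := by
    rw [Odd.neg_pow hpodd]
    linarith
  have hyw : IsCoprime y (-z) := hyz.neg_right
  have hxw : IsCoprime x (-z) := hxz.neg_right
  -- p divides one of x, y, -z
  have hpdvd : (p : ℤ) ∣ x ∨ (p : ℤ) ∣ y ∨ (p : ℤ) ∣ -z := by
    by_contra hc
    push_neg at hc
    obtain ⟨h1, h2, h3⟩ := hc
    rcases q_dvd_of_sum p q hp0 hgp rfl hq7 x y (-z) heq with hq | hq | hq
    · exact caseI p q hp hpodd hp3 hgp rfl x y (-z) hxy hyw hxw heq h1 h2 h3 hq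
    · exact caseI p q hp hpodd hp3 hgp rfl y x (-z) hxy.symm hxw hyw
        (by linarith) h2 h1 h3 hq
    · exact caseI p q hp hpodd hp3 hgp rfl (-z) x y hxw.symm hxy hyw.symm
        (by linarith) h3 h1 h2 hq
  rcases hpdvd with h | h | h
  · exact Or.inl (caseII p hp hpodd hp3 x y (-z) hx hxy hxw heq h)
  · refine Or.inr (Or.inl ?_)
    exact caseII p hp hpodd hp3 y x (-z) hy hxy.symm hyw (by linarith) h
  · refine Or.inr (Or.inr ?_)
    have := caseII p hp hpodd hp3 (-z) x y hw hxw.symm hyw.symm (by linarith) h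
    exact (dvd_neg).mp this
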